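/- Let A be a unital C*-algebra and (z_k) a sequence in the standard module l₂(A) such that z_k lies in the free submodule N_k, where l₂(A) = N₁ ⊕ N₂ ⊕ ... is a decomposition into free modules generated by consecutive standard basis vectors, ‖z_k‖ ≤ 1 + ε/2^k, and (b_k) is a sequence in A with partial sums of Σ b_k* b_k uniformly bounded. Then β(x) = Σ_k b_k* ⟨z_k, x⟩ defines a bounded A-linear functional on l₂(A). -/

import Mathlib

open scoped InnerProductSpace WithCStarModule

section Aux

/-- Cauchy–Schwarz for finite sums in a C⋆-algebra. -/
lemma cs_fin {A : Type} [NonUnitalCStarAlgebra A] [PartialOrder A] [StarOrderedRing A]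
    {ι : Type} [Fintype ι] (u v : ι → A) :
    ‖∑ i, star (u i) * v i‖ ≤
      Real.sqrt ‖∑ i, star (u i) * u i‖ * Real.sqrt ‖∑ i, star (v i) * v i‖ := by
  let U : C⋆ᵐᵒᵈ(A, ι → A) := (WithCStarModule.equiv _ _).symm (fun i => star (v i))
  let V : C⋆ᵐᵒᵈ(A, ι → A) := (WithCStarModule.equiv _ _).symm (fun i => star (u i))
  have h1 : ⟪U, V⟫_A = ∑ i, star (u i) * v i := by rw [WithCStarModule.pi_inner]; simp [WithCStarModule.inner_def, U, V]
  have h2 : ‖V‖ = Real.sqrt ‖∑ i, star (u i) * u i‖ := by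
    rw [WithCStarModule.pi_norm]; simp [WithCStarModule.inner_def, V]
  have h3 : ‖U‖ = Real.sqrt ‖∑ i, star (v i) * v i‖ := by
    rw [WithCStarModule.pi_norm]; simp [WithCStarModule.inner_def, U]
  calc ‖∑ i, star (u i) * v i‖ = ‖⟪U, V⟫_A‖ := by rw [h1]
    _ ≤ ‖U‖ * ‖V‖ := CStarModule.norm_inner_le _
    _ = _ := by rw [h2, h3, mul_comm]

/-- Cauchy–Schwarz over a finset. -/
lemma cs_finset {A : Type} [NonUnitalCStarAlgebra A] [PartialOrder A] [StarOrderedRing A]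
    (F : Finset ℕ) (u v : ℕ → A) :
    ‖∑ i ∈ F, star (u i) * v i‖ ≤
      Real.sqrt ‖∑ i ∈ F, star (u i) * u i‖ * Real.sqrt ‖∑ i ∈ F, star (v i) * v i‖ := by
  rw [← Finset.sum_coe_sort F fun j => star (u j) * v j,
    ← Finset.sum_coe_sort F fun j => star (u j) * u j,
    ← Finset.sum_coe_sort F fun j => star (v j) * v j]
  exact cs_fin (ι := ↥F) (fun i => u i) (fun i => v i)

/-- The index of the block containing `i`. -/
def blkIdx (ν : ℕ → ℕ) (i : ℕ) : ℕ := Nat.findGreatest (fun k => ν k ≤ i) i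

lemma blkIdx_spec (ν : ℕ → ℕ) (hν : StrictMono ν) (hν0 : ν 0 = 0) (i : ℕ) :
    ν (blkIdx ν i) ≤ i ∧ i < ν (blkIdx ν i + 1) := by
  have h1 : ν (blkIdx ν i) ≤ i :=
    Nat.findGreatest_spec (P := fun k => ν k ≤ i) (Nat.zero_le i) (by simp [hν0])
  refine ⟨h1, ?_⟩
  by_contra h
  push_neg at h
  have h2 : blkIdx ν i + 1 ≤ i := le_trans (hν.le_apply) h
  have h3 : blkIdx ν i + 1 ≤ blkIdx ν i :=
    Nat.le_findGreatest (P := fun k => ν k ≤ i) h2 h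
  omega

lemma blkIdx_eq_iff (ν : ℕ → ℕ) (hν : StrictMono ν) (hν0 : ν 0 = 0) (i k : ℕ) :
    blkIdx ν i = k ↔ (ν k ≤ i ∧ i < ν (k + 1)) := by
  constructor
  · rintro rfl; exact blkIdx_spec ν hν hν0 i
  · rintro ⟨h1, h2⟩
    obtain ⟨g1, g2⟩ := blkIdx_spec ν hν hν0 i
    by_contra hne
    rcases lt_or_gt_of_ne hne with hlt | hlt
    · exact absurd (le_trans (hν.monotone (by omega : blkIdx ν i + 1 ≤ k)) h1) (by omega)
    · exact absurd (le_trans (hν.monotone (by omega : k + 1 ≤ blkIdx ν i)) g1) (by omega)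

/-- nonnegativity of `algebraMap` of a nonneg real in a star-ordered algebra -/
lemma algebraMap_real_nonneg {A : Type} [CStarAlgebra A] [PartialOrder A] [StarOrderedRing A]
    {r : ℝ} (hr : 0 ≤ r) : (0 : A) ≤ algebraMap ℝ A r := by
  have : algebraMap ℝ A r =
      star (Real.sqrt r • (1 : A)) * (Real.sqrt r • (1 : A)) := by
    rw [star_smul, star_trivial, star_one, smul_mul_smul_comm, one_mul,
      Real.mul_self_sqrt hr, Algebra.algebraMap_eq_smul_one]
  rw [this]
  exact star_mul_self_nonneg _

end Aux



/-- Membership in the standard Hilbert module `H_A = l₂(A)`: the series `∑ xᵢ* xᵢ`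
converges in norm. -/
def MemHA {A : Type} [CStarAlgebra A] (x : ℕ → A) : Prop :=
  Summable fun i => star (x i) * x i

/-- The Hilbert module norm on `H_A`: `‖x‖ = ‖∑ xᵢ* xᵢ‖^{1/2}`. -/
noncomputable def HAnorm {A : Type} [CStarAlgebra A] (x : ℕ → A) : ℝ :=
  Real.sqrt ‖∑' i, star (x i) * x i‖

/-- A bounded `A`-linear functional on the standard Hilbert module `H_A`. -/
def IsBddAFunctional {A : Type} [CStarAlgebra A] (φ : (ℕ → A) → A) : Prop :=
  (∀ x y : ℕ → A, MemHA x → MemHA y → φ (x + y) = φ x + φ y) ∧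
  (∀ (x : ℕ → A) (a : A), MemHA x → φ (fun i => x i * a) = φ x * a) ∧
  (∃ C : ℝ, ∀ x : ℕ → A, MemHA x → ‖φ x‖ ≤ C * HAnorm x)

/-- Let `l₂(A) = N₁ ⊕ N₂ ⊕ ⋯` be a decomposition into free submodules
generated by consecutive standard basis vectors (blocks `[ν k, ν (k+1))` of the index set),
let `z k ∈ N_k` with `‖z k‖ ≤ 1 + ε/2^k`, and let `(b k)` have uniformly bounded partial sums
of `∑ bₖ* bₖ`. Then `β(x) = ∑ₖ bₖ* ⟨zₖ, x⟩` defines a bounded `A`-linear functional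
on `l₂(A)`. -/
theorem stmt11 {A : Type} [CStarAlgebra A]
    (ν : ℕ → ℕ) (hν_mono : StrictMono ν) (hν0 : ν 0 = 0)
    (ε : ℝ) (hε : 0 < ε)
    (z : ℕ → ℕ → A)
    (hz_supp : ∀ k i : ℕ, (i < ν k ∨ ν (k + 1) ≤ i) → z k i = 0)
    (hz_norm : ∀ k : ℕ, HAnorm (z k) ≤ 1 + ε / 2 ^ k)
    (b : ℕ → A) (hb : ∃ C : ℝ, ∀ N : ℕ, ‖∑ k ∈ Finset.range N, star (b k) * b k‖ ≤ C) :
    ∃ β : (ℕ → A) → A, IsBddAFunctional β ∧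
      ∀ x : ℕ → A, MemHA x →
        HasSum (fun k => star (b k) *
          ∑ i ∈ Finset.Ico (ν k) (ν (k + 1)), star (z k i) * x i) (β x) := by
  classical
  letI : PartialOrder A := CStarAlgebra.spectralOrder A
  letI : StarOrderedRing A := CStarAlgebra.spectralOrderedRing A
  obtain ⟨C, hC⟩ := hb
  have hC0 : (0 : ℝ) ≤ C := le_trans (norm_nonneg _) (hC 1)
  set K : ℕ → ℕ := blkIdx ν with hK
  have hKiff : ∀ i k : ℕ, K i = k ↔ (ν k ≤ i ∧ i < ν (k + 1)) :=
    fun i k => blkIdx_eq_iff ν hν_mono hν0 i k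
  set y : ℕ → A := fun i => z (K i) i * b (K i) with hy
  set M : ℝ := (1 + ε) ^ 2 with hM
  have hM0 : (0 : ℝ) ≤ M := sq_nonneg _
  set D : ℝ := M * C with hD
  have hD0 : (0 : ℝ) ≤ D := mul_nonneg hM0 hC0
  -- the norm of each (partial) block inner product of z is at most M
  have hzM : ∀ (k : ℕ) (G : Finset ℕ), G ⊆ Finset.Ico (ν k) (ν (k + 1)) →
      ‖∑ i ∈ G, star (z k i) * z k i‖ ≤ M := by
    intro k G hG
    have hGpos : (0 : A) ≤ ∑ i ∈ G, star (z k i) * z k i :=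
      Finset.sum_nonneg fun i _ => star_mul_self_nonneg _
    have hle : ∑ i ∈ G, star (z k i) * z k i
        ≤ ∑ i ∈ Finset.Ico (ν k) (ν (k + 1)), star (z k i) * z k i :=
      Finset.sum_le_sum_of_subset_of_nonneg hG
        (fun i _ _ => star_mul_self_nonneg _)
    refine (CStarAlgebra.norm_le_norm_of_nonneg_of_le hGpos hle).trans ?_
    have htsum : ∑' i, star (z k i) * z k i
        = ∑ i ∈ Finset.Ico (ν k) (ν (k + 1)), star (z k i) * z k i := by
      refine tsum_eq_sum ?_
      intro i hi
      rw [Finset.mem_Ico] at hi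
      rw [hz_supp k i (by omega), mul_zero]
    have h1 : ‖∑ i ∈ Finset.Ico (ν k) (ν (k + 1)), star (z k i) * z k i‖
        = (HAnorm (z k)) ^ 2 := by
      rw [HAnorm, ← htsum, Real.sq_sqrt (norm_nonneg _)]
    rw [h1, hM]
    have h2 : (0:ℝ) ≤ 1 + ε / 2 ^ k := by positivity
    calc (HAnorm (z k)) ^ 2 ≤ (1 + ε / 2 ^ k) ^ 2 :=
          pow_le_pow_left₀ (Real.sqrt_nonneg _) (hz_norm k) 2
      _ ≤ (1 + ε) ^ 2 := by
          refine pow_le_pow_left₀ h2 ?_ 2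
          have : ε / 2 ^ k ≤ ε := div_le_self hε.le (one_le_pow₀ one_le_two)
          linarith
  -- Step A : partial sums of ⟨y,y⟩ are bounded by D
  have stepA : ∀ F : Finset ℕ, ‖∑ i ∈ F, star (y i) * y i‖ ≤ D := by
    intro F
    set T : Finset ℕ := F.image K with hT
    have hsplit : ∑ i ∈ F, star (y i) * y i
        = ∑ k ∈ T, ∑ i ∈ F.filter (fun i => K i = k), star (y i) * y i :=
      (Finset.sum_fiberwise_of_maps_to (fun i hi => Finset.mem_image_of_mem K hi) _).symm
    have hterm : ∀ k ∈ T, ∑ i ∈ F.filter (fun i => K i = k), star (y i) * y i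
        ≤ M • (star (b k) * b k) := by
      intro k _
      have hre : ∀ i ∈ F.filter (fun i => K i = k),
          star (y i) * y i = star (b k) * (star (z k i) * z k i) * b k := by
        intro i hi
        have hik : K i = k := (Finset.mem_filter.mp hi).2
        simp only [hy, hik, star_mul]
        noncomm_ring
      rw [Finset.sum_congr rfl hre]
      have hfac : ∑ i ∈ F.filter (fun i => K i = k),
          star (b k) * (star (z k i) * z k i) * b k
          = star (b k) * (∑ i ∈ F.filter (fun i => K i = k), star (z k i) * z k i) * b k := by
        rw [Finset.mul_sum, Finset.sum_mul]
      rw [hfac]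
      set S : A := ∑ i ∈ F.filter (fun i => K i = k), star (z k i) * z k i with hS
      have hSpos : (0 : A) ≤ S := Finset.sum_nonneg fun i _ => star_mul_self_nonneg _
      have hSM : ‖S‖ ≤ M := by
        refine hzM k _ ?_
        intro i hi
        have hik : K i = k := (Finset.mem_filter.mp hi).2
        rw [Finset.mem_Ico]
        exact (hKiff i k).mp hik
      have hSle : S ≤ algebraMap ℝ A M := by
        refine le_trans (IsSelfAdjoint.le_algebraMap_norm_self (IsSelfAdjoint.of_nonneg hSpos)) ?_
        rw [← sub_nonneg, ← map_sub]
        exact algebraMap_real_nonneg (by linarith)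
      calc star (b k) * S * b k ≤ star (b k) * algebraMap ℝ A M * b k :=
            star_left_conjugate_le_conjugate hSle _
        _ = M • (star (b k) * b k) := by
            rw [Algebra.algebraMap_eq_smul_one, mul_smul_comm, mul_one, smul_mul_assoc]
    have hsum_le : ∑ i ∈ F, star (y i) * y i ≤ M • ∑ k ∈ T, star (b k) * b k := by
      rw [hsplit, Finset.smul_sum]
      exact Finset.sum_le_sum hterm
    have hFpos : (0 : A) ≤ ∑ i ∈ F, star (y i) * y i :=
      Finset.sum_nonneg fun i _ => star_mul_self_nonneg _
    refine (CStarAlgebra.norm_le_norm_of_nonneg_of_le hFpos hsum_le).trans ?_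
    rw [norm_smul, Real.norm_of_nonneg hM0, hD]
    refine mul_le_mul_of_nonneg_left ?_ hM0
    -- ‖∑_{k ∈ T} b k* b k‖ ≤ C
    set N : ℕ := T.sup id + 1 with hN
    have hTsub : T ⊆ Finset.range N := by
      intro k hk
      rw [Finset.mem_range, hN]
      exact Nat.lt_succ_of_le (Finset.le_sup (f := id) hk)
    have hTpos : (0 : A) ≤ ∑ k ∈ T, star (b k) * b k :=
      Finset.sum_nonneg fun i _ => star_mul_self_nonneg _
    have hTle : ∑ k ∈ T, star (b k) * b k ≤ ∑ k ∈ Finset.range N, star (b k) * b k :=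
      Finset.sum_le_sum_of_subset_of_nonneg hTsub fun i _ _ => star_mul_self_nonneg _
    exact (CStarAlgebra.norm_le_norm_of_nonneg_of_le hTpos hTle).trans (hC N)
  -- Step B : Cauchy-Schwarz bound for partial sums of β
  have stepB : ∀ (x : ℕ → A) (F : Finset ℕ), ‖∑ i ∈ F, star (y i) * x i‖
      ≤ Real.sqrt D * Real.sqrt ‖∑ i ∈ F, star (x i) * x i‖ := by
    intro x F
    refine (cs_finset F y x).trans ?_
    exact mul_le_mul_of_nonneg_right
      (Real.sqrt_le_sqrt (stepA F)) (Real.sqrt_nonneg _)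
  -- summability
  have stepS : ∀ x : ℕ → A, MemHA x → Summable fun i => star (y i) * x i := by
    intro x hx
    rw [summable_iff_vanishing]
    intro e he
    obtain ⟨δ, hδ0, hδ⟩ := Metric.mem_nhds_iff.mp he
    set δ' : ℝ := (δ / (Real.sqrt D + 1)) ^ 2 with hδ'
    have hδ'0 : 0 < δ' := by positivity
    obtain ⟨s, hs⟩ := hx.vanishing (Metric.ball_mem_nhds 0 hδ'0)
    refine ⟨s, fun t ht => ?_⟩
    apply hδ
    rw [Metric.mem_ball, dist_zero_right]
    have h1 : ‖∑ i ∈ t, star (x i) * x i‖ < δ' := by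
      have := hs t ht
      rwa [Metric.mem_ball, dist_zero_right] at this
    calc ‖∑ i ∈ t, star (y i) * x i‖
        ≤ Real.sqrt D * Real.sqrt ‖∑ i ∈ t, star (x i) * x i‖ := stepB x t
      _ ≤ Real.sqrt D * (δ / (Real.sqrt D + 1)) := by
          refine mul_le_mul_of_nonneg_left ?_ (Real.sqrt_nonneg _)
          exact (Real.sqrt_le_sqrt h1.le).trans_eq (Real.sqrt_sq (by positivity))
      _ < (Real.sqrt D + 1) * (δ / (Real.sqrt D + 1)) := by
          refine mul_lt_mul_of_pos_right (by linarith) (by positivity)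
      _ = δ := by
          rw [mul_comm, div_mul_cancel₀ _ (by positivity : Real.sqrt D + 1 ≠ 0)]
  refine ⟨fun x => ∑' i, star (y i) * x i, ⟨?_, ?_, ?_⟩, ?_⟩
  · -- additivity
    intro x x' hx hx'
    have h1 := stepS x hx
    have h2 := stepS x' hx'
    simp only [Pi.add_apply, mul_add]
    exact Summable.tsum_add h1 h2
  · -- A-linearity
    intro x a hx
    have h1 := stepS x hx
    calc ∑' i, star (y i) * (x i * a) = ∑' i, star (y i) * x i * a := by
          simp only [mul_assoc]
      _ = (∑' i, star (y i) * x i) * a := h1.tsum_mul_right a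
  · -- boundedness
    refine ⟨Real.sqrt D, fun x hx => ?_⟩
    have h1 := (stepS x hx).hasSum
    refine le_of_tendsto h1.norm (Filter.Eventually.of_forall fun F => ?_)
    refine (stepB x F).trans ?_
    refine mul_le_mul_of_nonneg_left ?_ (Real.sqrt_nonneg _)
    rw [HAnorm]
    refine Real.sqrt_le_sqrt ?_
    have hpos : (0:A) ≤ ∑ i ∈ F, star (x i) * x i :=
      Finset.sum_nonneg fun i _ => star_mul_self_nonneg _
    exact CStarAlgebra.norm_le_norm_of_nonneg_of_le hpos
      (Summable.sum_le_tsum F (fun i _ => star_mul_self_nonneg (x i)) hx)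
  · -- block-sum formula
    intro x hx
    have hgs : HasSum (fun i => star (y i) * x i) (∑' i, star (y i) * x i) :=
      (stepS x hx).hasSum
    have h1 : HasSum ((fun i => star (y i) * x i) ∘ (Equiv.sigmaFiberEquiv K))
        (∑' i, star (y i) * x i) := (Equiv.sigmaFiberEquiv K).hasSum_iff.mpr hgs
    refine h1.sigma fun k => ?_
    have h2 : HasSum (fun i : {i // i ∈ Finset.Ico (ν k) (ν (k + 1))} => star (y i.1) * x i.1)
        (∑ i ∈ Finset.Ico (ν k) (ν (k + 1)), star (y i) * x i) := Finset.hasSum _ _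
    have hval : ∑ i ∈ Finset.Ico (ν k) (ν (k + 1)), star (y i) * x i
        = star (b k) * ∑ i ∈ Finset.Ico (ν k) (ν (k + 1)), star (z k i) * x i := by
      rw [Finset.mul_sum]
      refine Finset.sum_congr rfl fun i hi => ?_
      have hik : K i = k := (hKiff i k).mpr (Finset.mem_Ico.mp hi)
      simp only [hy, hik, star_mul]
      noncomm_ring
    have h3 := (Equiv.subtypeEquivRight
      (fun i => by rw [hKiff i k, Finset.mem_Ico]) :
        {i // K i = k} ≃ {i // i ∈ Finset.Ico (ν k) (ν (k + 1))}).hasSum_iff.mpr h2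
    rw [hval] at h3
    exact h3
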